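/- Let G be a finite connected graph of diameter 2 and x a vertex of G such that G − x also has diameter 2. Then gp(G) − 1 ≤ gp(G − x) ≤ gp(G). -/

import Mathlib

open SimpleGraph

/-- `S` is a *general position set* of `G`: no three distinct vertices of `S`
lie on a common shortest path (geodesic) of `G`. -/
def IsGPSet {V : Type*} (G : SimpleGraph V) (S : Set V) : Prop :=
  ∀ ⦃u v w : V⦄, u ∈ S → v ∈ S → w ∈ S → u ≠ v → u ≠ w → v ≠ w →
    ∀ p : G.Walk u v, p.IsPath → p.length = G.dist u v → w ∉ p.support

/-- The *general position number* of `G`: the maximum cardinality of a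
general position set. -/
noncomputable def gpNum {V : Type*} [Fintype V] (G : SimpleGraph V) : ℕ :=
  sSup {n : ℕ | ∃ S : Finset V, IsGPSet G ↑S ∧ S.card = n}

/-- The vertex-deleted subgraph `G - x`, induced on `V(G) \ {x}`. -/
def delVert {V : Type*} (G : SimpleGraph V) (x : V) : SimpleGraph {y : V // y ≠ x} :=
  G.comap Subtype.val


lemma mid_of_short_walk {W : Type*} {H : SimpleGraph W} {u v w : W}
    (p : H.Walk u v) (hlen : p.length ≤ 2) (hw : w ∈ p.support)
    (hwu : w ≠ u) (hwv : w ≠ v) :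
    p.length = 2 ∧ H.Adj u w ∧ H.Adj w v := by
  cases p with
  | nil => simp at hw; exact absurd hw hwu
  | cons h q =>
    cases q with
    | nil =>
      simp [SimpleGraph.Walk.support_cons] at hw
      rcases hw with h1 | h1
      · exact absurd h1 hwu
      · exact absurd h1 hwv
    | @cons c d _ h' q' =>
      have hl0 : q'.length = 0 := by
        simp only [SimpleGraph.Walk.length_cons] at hlen
        omega
      have hdv : d = v := SimpleGraph.Walk.eq_of_length_eq_zero hl0
      subst hdv
      have hsup : q'.support = [d] :=
        SimpleGraph.Walk.nil_iff_support_eq.mp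
          (SimpleGraph.Walk.nil_iff_length_eq.mpr hl0)
      simp [SimpleGraph.Walk.support_cons, hsup] at hw
      rcases hw with h1 | h1 | h1
      · exact absurd h1 hwu
      · subst h1; exact ⟨by simp [SimpleGraph.Walk.length_cons, hl0], h, h'⟩
      · exact absurd h1 hwv

lemma ediam_ne_top' {W : Type*} {H : SimpleGraph W} (h : H.diam = 2) : H.ediam ≠ ⊤ := by
  intro ht
  rw [SimpleGraph.diam, ht] at h
  simp at h

lemma path2 {W : Type*} {H : SimpleGraph W} {u w v : W} (h1 : H.Adj u w) (h2 : H.Adj w v)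
    (huv : u ≠ v) : (SimpleGraph.Walk.cons h1 (SimpleGraph.Walk.cons h2 .nil)).IsPath := by
  simp [SimpleGraph.Walk.cons_isPath_iff, h1.ne', h2.ne, huv]
  exact fun hc => absurd hc.symm h1.ne'

/-- If `G` is a finite connected graph of diameter 2 and `x` a
vertex such that `G - x` also has diameter 2, then
`gp(G) - 1 ≤ gp(G - x) ≤ gp(G)`. -/
theorem stmt_7 {V : Type*} [Fintype V] [DecidableEq V] (G : SimpleGraph V)
    (hG : G.Connected) (hdiam : G.diam = 2) (x : V)
    (hdiam' : (delVert G x).diam = 2) :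
    gpNum G - 1 ≤ gpNum (delVert G x) ∧ gpNum (delVert G x) ≤ gpNum G := by
  set H := delVert G x with hH
  have hGtop : G.ediam ≠ ⊤ := ediam_ne_top' hdiam
  have hHtop : H.ediam ≠ ⊤ := ediam_ne_top' hdiam'
  have hadjHG : ∀ a b : {y : V // y ≠ x}, H.Adj a b ↔ G.Adj ↑a ↑b := fun a b => Iff.rfl
  have hdistG2 : ∀ u v : V, u ≠ v → ¬ G.Adj u v → G.dist u v = 2 := by
    intro u v huv hna
    have h1 : G.dist u v ≤ 2 := hdiam ▸ SimpleGraph.dist_le_diam hGtop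
    have h2 : 0 < G.dist u v := hG.pos_dist_of_ne huv
    have h3 : G.dist u v ≠ 1 := fun hc => hna (SimpleGraph.dist_eq_one_iff_adj.mp hc)
    omega
  have bddG : BddAbove {n : ℕ | ∃ S : Finset V, IsGPSet G ↑S ∧ S.card = n} := by
    refine ⟨Fintype.card V, fun n hn => ?_⟩
    obtain ⟨S, _, rfl⟩ := hn
    exact S.card_le_univ.trans (by simp)
  have bddH : BddAbove {n : ℕ | ∃ S : Finset {y : V // y ≠ x}, IsGPSet H ↑S ∧ S.card = n} := by
    refine ⟨Fintype.card {y : V // y ≠ x}, fun n hn => ?_⟩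
    obtain ⟨S, _, rfl⟩ := hn
    exact S.card_le_univ.trans (by simp)
  constructor
  · -- gp(G) - 1 ≤ gp(H)
    have hne : {n : ℕ | ∃ S : Finset V, IsGPSet G ↑S ∧ S.card = n}.Nonempty :=
      ⟨0, ∅, by intro u v w hu; simp at hu, by simp⟩
    obtain ⟨S, hS, hcard⟩ := Nat.sSup_mem hne bddG
    set S' : Finset {y : V // y ≠ x} := S.subtype (· ≠ x) with hS'
    have hgp : IsGPSet H ↑S' := by
      intro u v w hu hv hw huv huw hvw p hp hlen hwmem
      have hle : p.length ≤ 2 := by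
        rw [hlen]; exact hdiam' ▸ SimpleGraph.dist_le_diam hHtop
      obtain ⟨hl2, h1, h2⟩ := mid_of_short_walk p hle hwmem (Ne.symm huw) (Ne.symm hvw)
      have huv' : (u : V) ≠ (v : V) := fun hc => huv (Subtype.ext hc)
      have hnadj : ¬ G.Adj (u : V) (v : V) := by
        intro hc
        have : H.dist u v = 1 := SimpleGraph.dist_eq_one_iff_adj.mpr hc
        omega
      have hdG : G.dist (u : V) (v : V) = 2 := hdistG2 _ _ huv' hnadj
      have g1 : G.Adj (u : V) (w : V) := h1
      have g2 : G.Adj (w : V) (v : V) := h2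
      have hmemS : ∀ a : {y : V // y ≠ x}, a ∈ S' → (a : V) ∈ (↑S : Set V) := by
        intro a ha; simpa [hS', Finset.mem_subtype] using ha
      refine hS (hmemS u hu) (hmemS v hv) (hmemS w hw) huv'
        (fun hc => huw (Subtype.ext hc)) (fun hc => hvw (Subtype.ext hc))
        (SimpleGraph.Walk.cons g1 (SimpleGraph.Walk.cons g2 .nil))
        (path2 g1 g2 huv') (by simp [hdG]) ?_
      simp [SimpleGraph.Walk.support_cons]
    have hcard' : S.card - 1 ≤ S'.card := by
      rw [hS', Finset.card_subtype]
      have : S.erase x ⊆ S.filter (· ≠ x) := by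
        intro a ha
        rw [Finset.mem_erase] at ha
        exact Finset.mem_filter.mpr ⟨ha.2, ha.1⟩
      calc S.card - 1 ≤ (S.erase x).card := Finset.pred_card_le_card_erase
        _ ≤ (S.filter (· ≠ x)).card := Finset.card_le_card this
    calc gpNum G - 1 = S.card - 1 := by rw [hcard]; rfl
      _ ≤ S'.card := hcard'
      _ ≤ gpNum H := le_csSup bddH ⟨S', hgp, rfl⟩
  · -- gp(H) ≤ gp(G)
    have hne : {n : ℕ | ∃ S : Finset {y : V // y ≠ x}, IsGPSet H ↑S ∧ S.card = n}.Nonempty :=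
      ⟨0, ∅, by intro u v w hu; simp at hu, by simp⟩
    obtain ⟨S', hS', hcard⟩ := Nat.sSup_mem hne bddH
    set T : Finset V := S'.image Subtype.val with hT
    have hgp : IsGPSet G ↑T := by
      intro u v w hu hv hw huv huw hvw p hp hlen hwmem
      simp only [hT, Finset.coe_image, Set.mem_image, Finset.mem_coe] at hu hv hw
      obtain ⟨u', hu', rfl⟩ := hu
      obtain ⟨v', hv', rfl⟩ := hv
      obtain ⟨w', hw', rfl⟩ := hw
      have hle : p.length ≤ 2 := by
        rw [hlen]; exact hdiam ▸ SimpleGraph.dist_le_diam hGtop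
      obtain ⟨hl2, h1, h2⟩ := mid_of_short_walk p hle hwmem (Ne.symm huw) (Ne.symm hvw)
      have hdG : G.dist (u' : V) (v' : V) = 2 := by omega
      have hnadj : ¬ G.Adj (u' : V) (v' : V) := by
        intro hc
        have := SimpleGraph.dist_eq_one_iff_adj.mpr hc
        omega
      have g1 : H.Adj u' w' := h1
      have g2 : H.Adj w' v' := h2
      have huv' : u' ≠ v' := fun hc => huv (congrArg Subtype.val hc)
      have hreach : H.Reachable u' v' :=
        ⟨SimpleGraph.Walk.cons g1 (SimpleGraph.Walk.cons g2 .nil)⟩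
      have hdH : H.dist u' v' = 2 := by
        have ha : H.dist u' v' ≤ 2 := hdiam' ▸ SimpleGraph.dist_le_diam hHtop
        have hb : 0 < H.dist u' v' := hreach.pos_dist_of_ne huv'
        have hc : H.dist u' v' ≠ 1 := fun hc =>
          hnadj ((hadjHG u' v').mp (SimpleGraph.dist_eq_one_iff_adj.mp hc))
        omega
      refine hS' hu' hv' hw' huv'
        (fun hc => huw (congrArg Subtype.val hc)) (fun hc => hvw (congrArg Subtype.val hc))
        (SimpleGraph.Walk.cons g1 (SimpleGraph.Walk.cons g2 .nil))
        (path2 g1 g2 huv') (by simp [hdH]) ?_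
      simp [SimpleGraph.Walk.support_cons]
    have hcardT : T.card = S'.card := Finset.card_image_of_injective _ Subtype.val_injective
    calc gpNum H = S'.card := hcard.symm
      _ = T.card := hcardT.symm
      _ ≤ gpNum G := le_csSup bddG ⟨T, hgp, rfl⟩
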